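/- For the k-price auction with 2 ≤ k ≤ n and any p with v_{n−(k−3)} ≤ p ≤ v_1 (where v_{n+1} = 0), the bid profile in which agent 1 bids v_1, agents 2 through n−(k−2) bid p, and the remaining k−2 agents bid v_1, is a pure-strategy Nash equilibrium in which agent 1 wins and pays p. -/

import Mathlib

open Classical

/-- The k-th highest bid (k counted from 1). -/
noncomputable def kthHighest {n : ℕ} (b : Fin n → ℝ) (k : ℕ) : ℝ :=
  ((List.ofFn b).mergeSort (fun x y => decide (y ≤ x))).getD (k - 1) 0

/-- Agent `i` wins: her bid is highest, with ties broken toward the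
agent with the highest valuation, i.e. (for strictly decreasing valuations)
the lowest index among the maximal bidders. -/
def wins {n : ℕ} (b : Fin n → ℝ) (i : Fin n) : Prop :=
  (∀ j, b j ≤ b i) ∧ ∀ j, b j = b i → i ≤ j

/-- The price paid by the winner in the k-price auction (2 ≤ k ≤ n), or in the
first-price auction (the case k = n+1), where the winner pays the highest bid. -/
noncomputable def price {n : ℕ} (k : ℕ) (b : Fin n → ℝ) : ℝ :=
  if k = n + 1 then kthHighest b 1 else kthHighest b k

/-- The winner gets her valuation minus the price; losers get 0. -/
noncomputable def utility {n : ℕ} (v : Fin n → ℝ) (k : ℕ) (b : Fin n → ℝ)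
    (i : Fin n) : ℝ :=
  if wins b i then v i - price k b else 0

/-- Pure-strategy Nash equilibrium with nonnegative bids: no agent can strictly
improve her utility by a unilateral deviation to another nonnegative bid. -/
def NashEq {n : ℕ} (v : Fin n → ℝ) (k : ℕ) (b : Fin n → ℝ) : Prop :=
  (∀ i, 0 ≤ b i) ∧
  ∀ i : Fin n, ∀ b' : ℝ, 0 ≤ b' →
    utility v k (Function.update b i b') i ≤ utility v k b i

/-- One-based valuation indexing, with the convention `v_{n+1} = 0`. -/
noncomputable def vIdx {n : ℕ} (v : Fin n → ℝ) (j : ℕ) : ℝ :=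
  if h : 1 ≤ j ∧ j ≤ n then v ⟨j - 1, by omega⟩ else 0

lemma countP_ofFn {n : ℕ} (b : Fin n → ℝ) (p : ℝ → Prop) [DecidablePred p] :
    List.countP (fun x => decide (p x)) (List.ofFn b)
      = (Finset.univ.filter fun j => p (b j)).card := by
  rw [List.ofFn_eq_map, List.countP_map]
  have h1 : (Finset.filter (fun j => p (b j)) Finset.univ).card
      = Multiset.card (Multiset.filter (fun j => p (b j)) (Finset.univ : Finset (Fin n)).val) := rfl
  rw [h1, Fin.univ_def]
  simp only [Multiset.filter_coe, Multiset.coe_card, List.countP_eq_length_filter]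
  congr 1

lemma kth_eq {n k : ℕ} (b : Fin n → ℝ) (hk : 1 ≤ k) (x : ℝ)
    (h1 : k ≤ (Finset.univ.filter fun j => x ≤ b j).card)
    (h2 : (Finset.univ.filter fun j => x < b j).card ≤ k - 1) :
    kthHighest b k = x := by
  set l := (List.ofFn b).mergeSort (fun x y => decide (y ≤ x)) with hl
  have hperm : l.Perm (List.ofFn b) := List.mergeSort_perm _ _
  have hsorted : List.Pairwise (fun a b : ℝ => decide (b ≤ a) = true) l :=
    List.pairwise_mergeSort (by intro a b c hab hbc; simp at *; linarith)
      (by intro a b; simp [le_total]) _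
  have hsorted' : ∀ i j : ℕ, (hi : i < j) → (hj : j < l.length) → l[j] ≤ l[i] := by
    intro i j hi hj
    have := List.pairwise_iff_get.mp hsorted ⟨i, by omega⟩ ⟨j, by omega⟩ hi
    simpa using this
  have hc1 : k ≤ List.countP (fun a => decide (x ≤ a)) l := by
    rw [hperm.countP_eq, countP_ofFn]; exact h1
  have hc2 : List.countP (fun a => decide (x < a)) l ≤ k - 1 := by
    rw [hperm.countP_eq, countP_ofFn]; exact h2
  have hlen : k ≤ l.length := le_trans hc1 List.countP_le_length
  have hklt : k - 1 < l.length := by omega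
  have hget : kthHighest b k = l[k-1] := by
    rw [kthHighest, ← hl, List.getD_eq_getElem _ _ hklt]
  rw [hget]
  set a := l[k-1] with ha
  by_contra hne
  rcases lt_or_gt_of_ne hne with hlt | hgt
  · -- a < x : elements ≥ x all among first k-1 positions
    have hdrop : List.countP (fun a => decide (x ≤ a)) (l.drop (k-1)) = 0 := by
      rw [List.countP_eq_zero]
      intro c hc
      rw [List.mem_iff_getElem] at hc
      obtain ⟨i, hi, rfl⟩ := hc
      have hi' : k - 1 + i < l.length := by
        have := hi; rw [List.length_drop] at this; omega
      have hgd : (l.drop (k-1))[i] = l[k-1+i] := List.getElem_drop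
      rw [hgd]
      have hle : l[k-1+i] ≤ a := by
        rcases Nat.eq_zero_or_pos i with h0 | h0
        · subst h0; simp [ha]
        · exact hsorted' (k-1) (k-1+i) (by omega) hi'
      simp; linarith
    have : List.countP (fun a => decide (x ≤ a)) l
        = List.countP (fun a => decide (x ≤ a)) (l.take (k-1)) + List.countP (fun a => decide (x ≤ a)) (l.drop (k-1)) := by
      rw [← List.countP_append, List.take_append_drop]
    rw [this, hdrop, Nat.add_zero] at hc1
    have := (List.countP_le_length (l := l.take (k-1)) (p := fun a => decide (x ≤ a)))
    have hlt' : (l.take (k-1)).length ≤ k - 1 := by simp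
    omega
  · -- x < a : first k positions all > x
    have htake : List.countP (fun c => decide (x < c)) (l.take k) = (l.take k).length := by
      rw [List.countP_eq_length]
      intro c hc
      rw [List.mem_iff_getElem] at hc
      obtain ⟨i, hi, rfl⟩ := hc
      have hilen : i < l.length := by
        have := hi; simp at this; omega
      rw [List.getElem_take]
      have hik : i < k := by simp at hi; omega
      have : a ≤ l[i] := by
        rcases Nat.lt_or_ge i (k-1) with h0 | h0
        · exact hsorted' i (k-1) (by omega) hklt
        · have : i = k-1 := by omega
          subst this; simp [ha]
      simp; linarith
    have hlen' : (l.take k).length = k := by simp; omega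
    have hsub : List.countP (fun c => decide (x < c)) (l.take k)
        ≤ List.countP (fun c => decide (x < c)) l :=
      List.Sublist.countP_le (List.take_sublist _ _)
    rw [htake, hlen'] at hsub
    omega

lemma cardS {n k : ℕ} (hn : 2 ≤ n) (hk2 : 2 ≤ k) (hkn : k ≤ n) :
    (Finset.univ.filter fun j : Fin n => j.val = 0 ∨ n + 2 - k ≤ j.val).card = k - 1 := by
  rcases Nat.eq_or_lt_of_le hk2 with h2 | h3
  · have : (Finset.univ.filter fun j : Fin n => j.val = 0 ∨ n + 2 - k ≤ j.val)
        = {⟨0, by omega⟩} := by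
      ext j
      simp only [Finset.mem_filter, Finset.mem_univ, true_and, Finset.mem_singleton]
      constructor
      · rintro (h | h)
        · exact Fin.ext h
        · exact absurd j.isLt (by omega)
      · rintro rfl; left; rfl
    rw [this]; simp; omega
  · have hm : n + 2 - k < n := by omega
    have : (Finset.univ.filter fun j : Fin n => j.val = 0 ∨ n + 2 - k ≤ j.val)
        = insert ⟨0, by omega⟩ (Finset.Ici (⟨n + 2 - k, hm⟩ : Fin n)) := by
      ext j
      simp only [Finset.mem_filter, Finset.mem_univ, true_and, Finset.mem_insert,
        Finset.mem_Ici, Fin.le_def]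
      constructor
      · rintro (h | h)
        · exact Or.inl (Fin.ext h)
        · exact Or.inr h
      · rintro (rfl | h)
        · exact Or.inl rfl
        · exact Or.inr h
    rw [this, Finset.card_insert_of_notMem, Fin.card_Ici]
    · show n - (n + 2 - k) + 1 = k - 1
      omega
    · simp [Fin.le_def]; omega

theorem stmt4 {n : ℕ} (hn : 2 ≤ n) (v : Fin n → ℝ) (hv : StrictAnti v) (hvpos : ∀ i, 0 < v i) (k : ℕ) (hk2 : 2 ≤ k) (hkn : k ≤ n)
    (p : ℝ) (hp1 : vIdx v (n + 3 - k) ≤ p) (hp2 : p ≤ v ⟨0, by omega⟩)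
    (b : Fin n → ℝ)
    (hbdef : ∀ j : Fin n,
      b j = if j.val = 0 ∨ n + 2 - k ≤ j.val then v ⟨0, by omega⟩ else p) :
    NashEq v k b ∧ wins b ⟨0, by omega⟩ ∧ price k b = p := by
  set i0 : Fin n := ⟨0, by omega⟩ with hi0
  set v0 : ℝ := v i0 with hv0
  set S : Finset (Fin n) := Finset.univ.filter fun j : Fin n => j.val = 0 ∨ n + 2 - k ≤ j.val
    with hSdef
  have hS : S.card = k - 1 := cardS hn hk2 hkn
  have hmemS : ∀ j : Fin n, j ∈ S ↔ (j.val = 0 ∨ n + 2 - k ≤ j.val) := by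
    intro j; simp [hSdef]
  have hb0 : b i0 = v0 := by rw [hbdef, if_pos (Or.inl rfl)]
  have hpnn : 0 ≤ p := by
    refine le_trans ?_ hp1
    rw [vIdx]
    split
    · exact le_of_lt (hvpos _)
    · exact le_refl 0
  have hble : ∀ j, b j ≤ v0 := by
    intro j
    rw [hbdef]
    split
    · exact le_refl _
    · exact hp2
  have hbge : ∀ j, p ≤ b j := by
    intro j
    rw [hbdef]
    split
    · exact hp2
    · exact le_refl _
  have hbS : ∀ j : Fin n, j ∉ S → b j = p := by
    intro j hj
    rw [hbdef, if_neg]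
    rw [hmemS] at hj; exact hj
  have hwins0 : wins b i0 := by
    constructor
    · intro j; rw [hb0]; exact hble j
    · intro j _; exact Fin.mk_le_of_le_val (Nat.zero_le _)
  have hnotwins : ∀ j : Fin n, j ≠ i0 → ¬ wins b j := by
    intro j hj hw
    have h1 : b i0 ≤ b j := hw.1 i0
    have h2 : b j ≤ b i0 := by rw [hb0]; exact hble j
    have h3 : b i0 = b j := le_antisymm h1 h2
    have := hw.2 i0 h3
    exact hj (le_antisymm (Fin.mk_le_of_le_val (Nat.zero_le _)) this ▸ rfl) |>.elim
  have hkne : ¬ (k = n + 1) := by omega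
  have hprice : price k b = p := by
    rw [price, if_neg hkne]
    apply kth_eq b (by omega) p
    · have : (Finset.univ.filter fun j => p ≤ b j) = Finset.univ := by
        apply Finset.filter_true_of_mem
        intro j _; exact hbge j
      rw [this, Finset.card_univ, Fintype.card_fin]; exact hkn
    · refine le_trans (Finset.card_le_card ?_) (le_of_eq hS)
      intro j hj
      simp only [Finset.mem_filter, Finset.mem_univ, true_and] at hj
      by_contra hc
      have := hbS j hc
      rw [this] at hj
      exact lt_irrefl p hj
  have hutil0 : utility v k b i0 = v0 - p := by
    rw [utility, if_pos hwins0, hprice]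
  refine ⟨⟨?_, ?_⟩, hwins0, hprice⟩
  · intro i
    exact le_trans hpnn (hbge i)
  · intro i b' hb'
    set b'' := Function.update b i b' with hb''
    have hb''ne : ∀ j, j ≠ i → b'' j = b j := by
      intro j hj; rw [hb'', Function.update_of_ne hj]
    have hb''i : b'' i = b' := by rw [hb'', Function.update_self]
    by_cases hw : wins b'' i
    · -- deviator wins
      by_cases hi : i = i0
      · -- agent 0 deviates and still wins: price is still p
        have hj1 : (⟨1, by omega⟩ : Fin n) ≠ i := by
          rw [hi]; intro h
          have := congrArg Fin.val h
          simp [hi0] at this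
        have hpb' : p ≤ b' := by
          have h1 := hw.1 ⟨1, by omega⟩
          rw [hb''ne _ hj1, hb''i] at h1
          exact le_trans (hbge _) h1
        have hpr : price k b'' = p := by
          rw [price, if_neg hkne]
          apply kth_eq b'' (by omega) p
          · have : (Finset.univ.filter fun j => p ≤ b'' j) = Finset.univ := by
              apply Finset.filter_true_of_mem
              intro j _
              by_cases hji : j = i
              · subst hji; rw [hb''i]; exact hpb'
              · rw [hb''ne _ hji]; exact hbge j
            rw [this, Finset.card_univ, Fintype.card_fin]; exact hkn
          · refine le_trans (Finset.card_le_card ?_) (le_of_eq hS)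
            intro j hj
            simp only [Finset.mem_filter, Finset.mem_univ, true_and] at hj
            by_contra hc
            have hji : j ≠ i := by
              intro h; subst h
              rw [hmemS] at hc; exact hc (Or.inl (by rw [hi]))
            rw [hb''ne _ hji, hbS j hc] at hj
            exact lt_irrefl p hj
        rw [utility, if_pos hw, hpr, hi, hutil0, hv0]
      · -- agent i ≠ 0 deviates and wins: must overbid v0
        have h1 : b'' i0 ≤ b' := by rw [← hb''i]; exact hw.1 i0
        have hne0 : b'' i0 ≠ b' := by
          intro h
          rw [← hb''i] at h
          have := hw.2 i0 h
          exact hi (le_antisymm (Fin.mk_le_of_le_val (Nat.zero_le _)) this ▸ rfl)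
        have hii0 : i0 ≠ i := fun h => hi h.symm
        have hv0b' : v0 < b' := by
          rw [hb''ne i0 hii0, hb0] at h1 hne0
          exact lt_of_le_of_ne h1 hne0
        have hub : utility v k b i = 0 := by
          rw [utility, if_neg (hnotwins i hi)]
        rw [hub, utility, if_pos hw]
        by_cases hiS : i ∈ S
        · -- i is a high bidder: price = p, v i ≤ p
          have hiv : n + 2 - k ≤ i.val := by
            rw [hmemS] at hiS
            rcases hiS with h | h
            · exact absurd (Fin.ext h) hi
            · exact h
          have hk3 : 3 ≤ k := by
            have := i.isLt; omega
          have hpr : price k b'' = p := by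
            rw [price, if_neg hkne]
            apply kth_eq b'' (by omega) p
            · have : (Finset.univ.filter fun j => p ≤ b'' j) = Finset.univ := by
                apply Finset.filter_true_of_mem
                intro j _
                by_cases hji : j = i
                · subst hji; rw [hb''i]
                  exact le_trans (le_trans hp2 (le_of_lt hv0b')) (le_refl _)
                · rw [hb''ne _ hji]; exact hbge j
              rw [this, Finset.card_univ, Fintype.card_fin]; exact hkn
            · refine le_trans (Finset.card_le_card ?_) (le_of_eq hS)
              intro j hj
              simp only [Finset.mem_filter, Finset.mem_univ, true_and] at hj
              by_contra hc
              have hji : j ≠ i := by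
                intro h; subst h; exact hc hiS
              rw [hb''ne _ hji, hbS j hc] at hj
              exact lt_irrefl p hj
          rw [hpr]
          have hvip : v i ≤ p := by
            refine le_trans ?_ hp1
            rw [vIdx, dif_pos (by omega)]
            have : n + 3 - k - 1 = n + 2 - k := by omega
            rcases Nat.eq_or_lt_of_le hiv with he | hlt
            · apply le_of_eq; congr 1; exact Fin.ext (by simp [this, ← he])
            · apply le_of_lt; apply hv; rw [Fin.lt_def]; simp [this]; omega
          linarith
        · -- i is a middle bidder: price = v0, v i < v0
          have hpr : price k b'' = v0 := by
            rw [price, if_neg hkne]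
            apply kth_eq b'' (by omega) v0
            · refine le_trans ?_ (Finset.card_le_card (show insert i S ⊆ _ from ?_))
              · rw [Finset.card_insert_of_notMem hiS, hS]; omega
              · intro j hj
                simp only [Finset.mem_insert] at hj
                simp only [Finset.mem_filter, Finset.mem_univ, true_and]
                rcases hj with rfl | hj
                · rw [hb''i]; exact le_of_lt hv0b'
                · have hji : j ≠ i := fun h => hiS (h ▸ hj)
                  rw [hb''ne _ hji, hbdef, if_pos (by rw [hmemS] at hj; exact hj)]
            · refine le_trans (Finset.card_le_card (show _ ⊆ ({i} : Finset (Fin n)) from ?_)) ?_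
              · intro j hj
                simp only [Finset.mem_filter, Finset.mem_univ, true_and] at hj
                simp only [Finset.mem_singleton]
                by_contra hji
                rw [hb''ne _ hji] at hj
                exact absurd (hble j) (not_le.mpr hj)
              · rw [Finset.card_singleton]; omega
          rw [hpr]
          have : v i < v0 := by
            apply hv
            have hival : i.val ≠ 0 := fun h => hi (Fin.ext h)
            rw [Fin.lt_def]
            show (0:ℕ) < ↑i
            exact Nat.pos_of_ne_zero hival
          linarith
    · -- deviator does not win: utility 0
      rw [utility, if_neg hw]
      by_cases hi : i = i0
      · rw [hi, hutil0]; linarith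
      · rw [utility, if_neg (hnotwins i hi)]
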